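/- Let m > 1 and K = Q_2(ζ_{2^m}). Then 5^{2^{m−2}} ∈ N_{K|Q_2}(o_K^×); indeed N_{K|Q_2}(2+i) = 5^{2^{m−2}}, where i = ζ_{2^m}^{2^{m−2}} is a primitive 4th root of unity in K. -/

import Mathlib

open Polynomial IntermediateField Module

/-- `-1` is not a square in `ℚ_2`. -/
lemma padic2_sq_ne_neg_one (y : ℚ_[2]) : y ^ 2 ≠ -1 := by
  intro h
  have hy : ‖y‖ ≤ 1 := by
    have h2 : ‖y‖ ^ 2 = 1 := by
      rw [← norm_pow, h]; simp
    nlinarith [norm_nonneg y]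
  set z : ℤ_[2] := ⟨y, hy⟩ with hzdef
  have hz2 : z ^ 2 = -1 := by
    apply Subtype.ext
    push_cast
    exact h
  have hmap := congrArg (PadicInt.toZModPow 2) hz2
  rw [map_pow, map_neg, map_one] at hmap
  have : ∀ a : ZMod (2 ^ 2), a ^ 2 ≠ -1 := by decide
  exact this _ hmap

/-- The `2^m`-th cyclotomic polynomial is irreducible over `ℚ_2`. -/
lemma irr_cyclo_two_pow (m : ℕ) (hm : 0 < m) :
    Irreducible (Polynomial.cyclotomic (2 ^ m) ℚ_[2]) := by
  obtain ⟨k, rfl⟩ : ∃ k, m = k + 1 := ⟨m - 1, by omega⟩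
  have hE := cyclotomic_prime_pow_comp_X_add_one_isEisensteinAt 2 k
  set gZ : ℤ[X] := (cyclotomic (2 ^ (k + 1)) ℤ).comp (X + 1) with hgZ
  set g : ℤ_[2][X] := (cyclotomic (2 ^ (k + 1)) ℤ_[2]).comp (X + 1) with hg
  have hmap : gZ.map (Int.castRingHom ℤ_[2]) = g := by
    rw [hgZ, hg, Polynomial.map_comp, map_cyclotomic]
    simp
  have hXadd : (X + 1 : ℤ_[2][X]) = X + C 1 := by simp
  have hgm : g.Monic := by
    rw [hg, hXadd]
    exact (cyclotomic.monic _ _).comp (monic_X_add_C 1)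
      (by rw [natDegree_X_add_C]; exact one_ne_zero)
  have hZm : gZ.Monic := by
    rw [hgZ, show (X + 1 : ℤ[X]) = X + C 1 by simp]
    exact (cyclotomic.monic _ _).comp (monic_X_add_C 1)
      (by rw [natDegree_X_add_C]; exact one_ne_zero)
  have hdeg : g.natDegree = (2 ^ (k + 1)).totient := by
    rw [hg, natDegree_comp, hXadd, natDegree_X_add_C, mul_one, natDegree_cyclotomic]
  have hdegZ : gZ.natDegree = (2 ^ (k + 1)).totient := by
    rw [hgZ, natDegree_comp, show (X + 1 : ℤ[X]) = X + C 1 by simp, natDegree_X_add_C,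
      mul_one, natDegree_cyclotomic]
  have h2cast : ((2 : ℕ) : ℤ_[2]) = 2 := by norm_cast
  have hP : (Ideal.span {(2 : ℤ_[2])}).IsPrime := by
    rw [← h2cast, ← PadicInt.maximalIdeal_eq_span_p]
    exact (IsLocalRing.maximalIdeal.isMaximal _).isPrime
  have hEis : g.IsEisensteinAt (Ideal.span {(2 : ℤ_[2])}) := by
    constructor
    · rw [hgm.leadingCoeff]
      intro h1
      exact hP.ne_top (Ideal.eq_top_of_isUnit_mem _ h1 isUnit_one)
    · intro n hn
      rw [← hmap, coeff_map]
      have hmem := hE.mem (n := n) (by rw [hdegZ]; rw [hdeg] at hn; exact hn)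
      rw [Ideal.submodule_span_eq, Ideal.mem_span_singleton] at hmem
      rw [Ideal.mem_span_singleton]
      obtain ⟨c, hc⟩ := hmem
      exact ⟨(c : ℤ_[2]), by rw [hc, map_mul]; simp⟩
    · have hc0 : g.coeff 0 = 2 := by
        rw [coeff_zero_eq_eval_zero, hg, eval_comp]
        simp only [eval_add, eval_X, eval_one, zero_add]
        rw [eval_one_cyclotomic_prime_pow]
        exact h2cast
      rw [hc0, Ideal.span_singleton_pow, Ideal.mem_span_singleton]
      rintro ⟨c, hc⟩
      have h1 : ‖(2 : ℤ_[2])‖ = 2⁻¹ := by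
        have := PadicInt.norm_p (p := 2)
        simpa using this
      have hle : ‖c‖ ≤ 1 := PadicInt.norm_le_one c
      have hnc := congrArg (fun t : ℤ_[2] => ‖t‖) hc
      simp only [norm_mul, norm_pow, h1] at hnc
      nlinarith [norm_nonneg c, PadicInt.norm_le_one c]
  have hgi : Irreducible g :=
    hEis.irreducible hP hgm.isPrimitive
      (by rw [hdeg]; exact Nat.totient_pos.2 (by positivity))
  have hQ : Irreducible (g.map (algebraMap ℤ_[2] ℚ_[2])) :=
    (hgm.irreducible_iff_irreducible_map_fraction_map).1 hgi
  have hmapQ : g.map (algebraMap ℤ_[2] ℚ_[2]) =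
      (cyclotomic (2 ^ (k + 1)) ℚ_[2]).comp (X + C 1) := by
    rw [hg, Polynomial.map_comp, map_cyclotomic]
    simp
  rw [hmapQ] at hQ
  have hcompeq : (algEquivAevalXAddC (1 : ℚ_[2])) (cyclotomic (2 ^ (k + 1)) ℚ_[2]) =
      (cyclotomic (2 ^ (k + 1)) ℚ_[2]).comp (X + C 1) := by
    simp [algEquivAevalXAddC, algEquivOfCompEqX, ← comp_eq_aeval]
  exact (MulEquiv.irreducible_iff (algEquivAevalXAddC (1 : ℚ_[2]))).1 (hcompeq ▸ hQ)

/- STATEMENT 3: for m > 1 and K = Q_2(ζ_{2^m}), with i = ζ_{2^m}^{2^(m-2)} (a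
primitive 4th root of unity), N_{K|Q_2}(2 + i) = 5^{2^{m-2}}; in particular
5^{2^{m-2}} ∈ N_{K|Q_2}(o_K^×). -/
theorem stmt3 (m : ℕ) (hm : 1 < m)
    (K : Type*) [Field K] [Algebra ℚ_[2] K] [FiniteDimensional ℚ_[2] K]
    (ncyc : ℕ+) (hncyc : (ncyc : ℕ) = 2 ^ m) [IsCyclotomicExtension {(ncyc : ℕ)} ℚ_[2] K]
    (ζ : K) (hζ : IsPrimitiveRoot ζ (2 ^ m)) :
    letI : Algebra ℤ_[2] K :=
      ((algebraMap ℚ_[2] K).comp (algebraMap ℤ_[2] ℚ_[2])).toAlgebra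
    Algebra.norm ℚ_[2] ((2 : K) + ζ ^ (2 ^ (m - 2))) = 5 ^ (2 ^ (m - 2)) ∧
      ∃ u : (integralClosure ℤ_[2] K)ˣ,
        Algebra.norm ℚ_[2] ((↑(↑u : integralClosure ℤ_[2] K) : K)) = 5 ^ (2 ^ (m - 2)) := by
  letI : Algebra ℤ_[2] K := ((algebraMap ℚ_[2] K).comp (algebraMap ℤ_[2] ℚ_[2])).toAlgebra
  haveI : IsScalarTower ℤ_[2] ℚ_[2] K := IsScalarTower.of_algebraMap_eq fun x => rfl
  set i : K := ζ ^ 2 ^ (m - 2) with hidef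
  have hpoweq : (2 : ℕ) ^ m = 2 ^ (m - 2) * 4 := by
    have hmm : m = (m - 2) + 2 := by omega
    calc (2 : ℕ) ^ m = 2 ^ ((m - 2) + 2) := by rw [← hmm]
      _ = 2 ^ (m - 2) * 4 := by rw [pow_add]; norm_num
  have hi : IsPrimitiveRoot i 4 := IsPrimitiveRoot.pow (by positivity) hζ hpoweq
  have hi2 : i ^ 2 = -1 :=
    (IsPrimitiveRoot.pow (by norm_num) hi (by norm_num)).eq_neg_one_of_two_right
  set x : K := 2 + i with hxdef
  have key : x ^ 2 - 4 * x + 5 = 0 := by rw [hxdef]; linear_combination hi2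
  set p : ℚ_[2][X] := X ^ 2 - C 4 * X + C 5 with hpdef
  have hpm : p.Monic := by rw [hpdef]; monicity!
  have hpdeg : p.natDegree = 2 := by rw [hpdef]; compute_degree!
  have hc0 : p.coeff 0 = 5 := by simp [hpdef, coeff_X_pow]
  have hc1 : p.coeff 1 = -4 := by simp [hpdef, coeff_X_pow]
  have haev : (Polynomial.aeval x) p = 0 := by
    rw [hpdef]
    simp only [map_add, map_sub, map_pow, map_mul, aeval_X, aeval_C, map_ofNat]
    linear_combination key
  have hirrp : Irreducible p := by
    by_contra hni
    obtain ⟨c₁, c₂, hmul, hadd⟩ :=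
      (hpm.not_irreducible_iff_exists_add_mul_eq_coeff hpdeg).1 hni
    rw [hc0] at hmul
    rw [hc1] at hadd
    have hc₂ : c₂ = -4 - c₁ := by linear_combination -hadd
    subst hc₂
    exact padic2_sq_ne_neg_one (c₁ + 2) (by linear_combination hmul)
  have hx_int : IsIntegral ℚ_[2] x := IsIntegral.of_finite ℚ_[2] x
  have hmin : minpoly ℚ_[2] x = p := (minpoly.eq_of_irreducible_of_monic hirrp haev hpm).symm
  have hirrC : Irreducible (cyclotomic (ncyc : ℕ) ℚ_[2]) := by
    rw [hncyc]; exact irr_cyclo_two_pow m (by omega)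
  have hfin : finrank ℚ_[2] K = 2 ^ (m - 1) := by
    rw [IsCyclotomicExtension.finrank K hirrC, hncyc,
      Nat.totient_prime_pow Nat.prime_two (by omega : 0 < m)]
    simp
  have hfx : finrank ℚ_[2] ℚ_[2]⟮x⟯ = 2 := by
    rw [IntermediateField.adjoin.finrank hx_int, hmin, hpdeg]
  have htower := Module.finrank_mul_finrank ℚ_[2] ℚ_[2]⟮x⟯ K
  have hfxK : finrank ℚ_[2]⟮x⟯ K = 2 ^ (m - 2) := by
    rw [hfx, hfin] at htower
    have h2 : (2 : ℕ) ^ (m - 1) = 2 * 2 ^ (m - 2) := by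
      rw [← pow_succ']
      congr 1
      omega
    omega
  have hgen : Algebra.norm ℚ_[2] (AdjoinSimple.gen ℚ_[2] x) = 5 := by
    rw [← IntermediateField.adjoin.powerBasis_gen hx_int,
      Algebra.PowerBasis.norm_gen_eq_coeff_zero_minpoly,
      IntermediateField.adjoin.powerBasis_gen, IntermediateField.adjoin.powerBasis_dim,
      IntermediateField.minpoly_gen, hmin, hc0, hpdeg]
    norm_num
  have hnorm : Algebra.norm ℚ_[2] x = 5 ^ 2 ^ (m - 2) := by
    rw [Algebra.norm_eq_norm_adjoin ℚ_[2] x, hgen, hfxK]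
  have hint : ∀ y : K, y ^ 2 - 4 * y + 5 = 0 → IsIntegral ℤ_[2] y := by
    intro y hy
    refine ⟨X ^ 2 - C 4 * X + C 5, by monicity!, ?_⟩
    simp only [eval₂_add, eval₂_sub, eval₂_pow, eval₂_mul, eval₂_X, eval₂_C, eval₂_ofNat, map_ofNat]
    linear_combination hy
  have hxi : IsIntegral ℤ_[2] x := hint x key
  have hyi : IsIntegral ℤ_[2] (2 - i) := hint _ (by linear_combination hi2)
  have h5n : ‖(5 : ℤ_[2])‖ = 1 := by
    have hle := PadicInt.norm_le_one (5 : ℤ_[2])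
    rcases lt_or_eq_of_le hle with hlt | he
    · exfalso
      have hcast : ((5 : ℤ) : ℤ_[2]) = (5 : ℤ_[2]) := by norm_cast
      rw [← hcast, PadicInt.norm_int_lt_one_iff_dvd] at hlt
      norm_num at hlt
    · exact he
  obtain ⟨v, hv⟩ : IsUnit (5 : ℤ_[2]) := PadicInt.isUnit_iff.mpr h5n
  set b : K := algebraMap ℤ_[2] K ↑v⁻¹ * (2 - i) with hbdef
  have hbi : IsIntegral ℤ_[2] b := (isIntegral_algebraMap).mul hyi
  have hxb : x * b = 1 := by
    have h5K : algebraMap ℤ_[2] K ((v : ℤ_[2])) = 5 := by rw [hv]; exact map_ofNat _ 5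
    have hx5 : x * (2 - i) = 5 := by rw [hxdef]; linear_combination -hi2
    calc x * b = algebraMap ℤ_[2] K ↑v⁻¹ * (x * (2 - i)) := by rw [hbdef]; ring
      _ = algebraMap ℤ_[2] K ↑v⁻¹ * algebraMap ℤ_[2] K ↑v := by rw [hx5, h5K]
      _ = algebraMap ℤ_[2] K (↑v⁻¹ * ↑v) := by rw [map_mul]
      _ = 1 := by rw [Units.inv_mul]; exact map_one _
  refine ⟨hnorm, ⟨⟨⟨x, hxi⟩, ⟨b, hbi⟩, ?_, ?_⟩, ?_⟩⟩
  · exact Subtype.ext (by push_cast; exact hxb)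
  · exact Subtype.ext (by push_cast; linear_combination hxb)
  · exact hnorm
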